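/- Let α be irrational, define d_{2,ν}² = (q_{ν+1} - q_ν)/(ξ_ν - ξ_{ν+1}) and M_{2,ν} = (1/4)(d_{2,ν} ξ_ν + q_ν/d_{2,ν})². Then M_{2,ν} = F(α*_{ν+1}, α_{ν+2}⁻¹), where F(x,y) = (1-xy)²/(4(1+xy)(1-x)(1-y)). -/

import Mathlib

open Real Filter Set

/-- The function F from the paper. -/
noncomputable def Fm (x y : ℝ) : ℝ := (1 - x*y)^2 / (4*(1+x*y)*(1-x)*(1-y))

/-- The function G from the paper. -/
noncomputable def Gm (x y : ℝ) : ℝ := (x + y + 1)/4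

/-- Complete quotients of α : cq α 0 = α, cq α (n+1) = 1/{cq α n}. -/
noncomputable def cq (α : ℝ) : ℕ → ℝ
  | 0 => α
  | n+1 => (Int.fract (cq α n))⁻¹

/-- Partial quotients a_n of the continued fraction of α. -/
noncomputable def pquot (α : ℝ) (n : ℕ) : ℤ := ⌊cq α n⌋

/-- Denominators q_n of the convergents of α. -/
noncomputable def qd (α : ℝ) : ℕ → ℝ
  | 0 => 1
  | 1 => (pquot α 1 : ℝ)
  | n+2 => (pquot α (n+2) : ℝ) * qd α (n+1) + qd α n

/-- Numerators p_n of the convergents of α. -/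
noncomputable def pnum (α : ℝ) : ℕ → ℝ
  | 0 => (pquot α 0 : ℝ)
  | 1 => (pquot α 1 : ℝ) * (pquot α 0 : ℝ) + 1
  | n+2 => (pquot α (n+2) : ℝ) * pnum α (n+1) + pnum α n

/-- ξ_n = |q_n α - p_n|. -/
noncomputable def xi (α : ℝ) (n : ℕ) : ℝ := |qd α n * α - pnum α n|

/-- α*_n = [0; a_n, ..., a_1] = q_{n-1}/q_n. -/
noncomputable def astar (α : ℝ) (n : ℕ) : ℝ := qd α (n-1) / qd α n

/-- Distance from x to the nearest integer. -/
noncomputable def nidist (x : ℝ) : ℝ := |x - round x|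

/-- The ν-th convergent denominator satisfies the Legendre condition. -/
noncomputable def LegendreDen (α : ℝ) (ν : ℕ) : Prop :=
  |α - pnum α ν / qd α ν| < 1/(2 * (qd α ν)^2)

/-- ψ_α(t) = min_{1 ≤ x ≤ t} ‖xα‖. -/
noncomputable def psif (α : ℝ) (t : ℝ) : ℝ :=
  sInf {d : ℝ | ∃ x : ℤ, 1 ≤ x ∧ (x:ℝ) ≤ t ∧ d = nidist (x*α)}

section aux
variable {α : ℝ}

lemma cq_irr (hα : Irrational α) : ∀ n, Irrational (cq α n)
  | 0 => hα
  | n+1 => by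
    have h := cq_irr hα n
    have : Irrational (Int.fract (cq α n)) := by
      rw [Int.fract]
      exact h.sub_intCast _
    simpa [cq] using this.inv

lemma fract_pos (hα : Irrational α) (n : ℕ) : 0 < Int.fract (cq α n) := by
  rcases lt_or_eq_of_le (Int.fract_nonneg (cq α n)) with h | h
  · exact h
  · exfalso
    have h2 : Irrational (Int.fract (cq α n)) := by
      rw [Int.fract]; exact (cq_irr hα n).sub_intCast _
    rw [← h] at h2
    exact h2 ⟨0, by simp⟩

lemma one_lt_cq_succ (hα : Irrational α) (n : ℕ) : 1 < cq α (n+1) := by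
  have h2 := fract_pos hα n
  have h3 := Int.fract_lt_one (cq α n)
  rw [show cq α (n+1) = (Int.fract (cq α n))⁻¹ from rfl]
  exact (one_lt_inv₀ h2).mpr h3

lemma pquot_ge_one (hα : Irrational α) (n : ℕ) : (1:ℝ) ≤ (pquot α (n+1) : ℝ) := by
  have := one_lt_cq_succ hα n
  have : (1:ℤ) ≤ ⌊cq α (n+1)⌋ := by
    rw [Int.le_floor]; exact_mod_cast this.le
  exact_mod_cast this

lemma qd_ge_one (hα : Irrational α) : ∀ n, 1 ≤ qd α n
  | 0 => le_refl 1
  | 1 => by rw [show qd α 1 = (pquot α 1 : ℝ) from rfl]; exact pquot_ge_one hα 0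
  | n+2 => by
    have h1 := qd_ge_one hα (n+1)
    have h2 := qd_ge_one hα n
    have ha := pquot_ge_one hα (n+1)
    rw [show qd α (n+2) = (pquot α (n+2) : ℝ) * qd α (n+1) + qd α n from rfl]
    nlinarith

lemma qd_mono (hα : Irrational α) : ∀ n, qd α n ≤ qd α (n+1)
  | 0 => by
    rw [show qd α 0 = 1 from rfl, show qd α 1 = (pquot α 1 : ℝ) from rfl]
    exact pquot_ge_one hα 0
  | n+1 => by
    have h1 := qd_ge_one hα n
    have h2 := qd_ge_one hα (n+1)
    have ha := pquot_ge_one hα (n+1)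
    rw [show qd α (n+2) = (pquot α (n+2) : ℝ) * qd α (n+1) + qd α n from rfl]
    nlinarith

/-- determinant -/
lemma det_qp (hα : Irrational α) :
    ∀ n, qd α (n+1) * pnum α n - pnum α (n+1) * qd α n = (-1)^(n+1)
  | 0 => by
    simp only [qd, pnum]
    ring
  | n+1 => by
    have ih := det_qp hα n
    rw [show qd α (n+2) = (pquot α (n+2) : ℝ) * qd α (n+1) + qd α n from rfl,
        show pnum α (n+2) = (pquot α (n+2) : ℝ) * pnum α (n+1) + pnum α n from rfl]
    rw [pow_succ (-1 : ℝ) (n+1), ← ih]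
    ring

/-- e recurrence -/
lemma e_rec (hα : Irrational α) :
    ∀ n, qd α (n+1) * α - pnum α (n+1)
      = -(Int.fract (cq α (n+1))) * (qd α n * α - pnum α n)
  | 0 => by
    have hne : α - (pquot α 0 : ℝ) ≠ 0 := by
      intro h
      exact hα ⟨pquot α 0, by push_cast; linarith⟩
    have hc1 : cq α 1 = (Int.fract α)⁻¹ := rfl
    have h1 : Int.fract (cq α 1) = cq α 1 - (pquot α 1 : ℝ) := rfl
    have ht : Int.fract α = α - (pquot α 0 : ℝ) := rfl
    rw [show qd α 1 = (pquot α 1 : ℝ) from rfl,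
        show pnum α 1 = (pquot α 1 : ℝ) * (pquot α 0 : ℝ) + 1 from rfl,
        show qd α 0 = 1 from rfl, show pnum α 0 = (pquot α 0 : ℝ) from rfl,
        h1, hc1, ht]
    field_simp
    ring
  | n+1 => by
    have ih := e_rec hα n
    have hf : Int.fract (cq α (n+1)) ≠ 0 := (fract_pos hα (n+1)).ne'
    have hcq : cq α (n+2) = (Int.fract (cq α (n+1)))⁻¹ := rfl
    have hen : qd α n * α - pnum α n
        = -(cq α (n+2)) * (qd α (n+1) * α - pnum α (n+1)) := by
      rw [ih, hcq]
      field_simp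
    rw [show qd α (n+2) = (pquot α (n+2) : ℝ) * qd α (n+1) + qd α n from rfl,
        show pnum α (n+2) = (pquot α (n+2) : ℝ) * pnum α (n+1) + pnum α n from rfl]
    have hfr : Int.fract (cq α (n+2)) = cq α (n+2) - (pquot α (n+2) : ℝ) := by
      rw [Int.fract, pquot]
    rw [hfr]
    have : (pquot α (n+2) : ℝ) * qd α (n+1) + qd α n = (pquot α (n+2) : ℝ) * qd α (n+1) + qd α n := rfl
    nlinarith [hen]

lemma e_sign (hα : Irrational α) : ∀ n, 0 < (-1)^n * (qd α n * α - pnum α n)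
  | 0 => by
    simp only [pow_zero, one_mul, show qd α 0 = 1 from rfl,
      show pnum α 0 = (pquot α 0 : ℝ) from rfl, one_mul]
    rw [show (pquot α 0 : ℝ) = (⌊α⌋ : ℝ) by rw [pquot]; rfl]
    have := fract_pos hα 0
    rw [Int.fract, show cq α 0 = α from rfl] at this
    linarith
  | n+1 => by
    have ih := e_sign hα n
    have hf := fract_pos hα (n+1)
    rw [e_rec hα n, pow_succ]
    have : (-1:ℝ)^n * (-1) * (-(Int.fract (cq α (n+1))) * (qd α n * α - pnum α n))
        = Int.fract (cq α (n+1)) * ((-1:ℝ)^n * (qd α n * α - pnum α n)) := by ring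
    rw [this]
    positivity

lemma xi_eq (hα : Irrational α) (n : ℕ) : xi α n = (-1)^n * (qd α n * α - pnum α n) := by
  rcases Nat.even_or_odd n with h | h
  · rw [xi, abs_of_pos, h.neg_one_pow, one_mul]
    have := e_sign hα n
    rwa [h.neg_one_pow, one_mul] at this
  · have := e_sign hα n
    rw [h.neg_one_pow, neg_one_mul] at this ⊢
    rw [xi, abs_of_neg (by linarith)]

lemma xi_pos (hα : Irrational α) (n : ℕ) : 0 < xi α n := by
  rw [xi_eq hα]; exact e_sign hα n

lemma xi_succ (hα : Irrational α) (n : ℕ) :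
    xi α (n+1) * cq α (n+2) = xi α n := by
  have hf : Int.fract (cq α (n+1)) ≠ 0 := (fract_pos hα (n+1)).ne'
  rw [xi_eq hα, xi_eq hα, e_rec hα n, show cq α (n+2) = (Int.fract (cq α (n+1)))⁻¹ from rfl,
    pow_succ]
  field_simp

lemma xi_sum (hα : Irrational α) (n : ℕ) :
    qd α (n+1) * xi α n + qd α n * xi α (n+1) = 1 := by
  have hd := det_qp hα n
  rw [xi_eq hα, xi_eq hα, pow_succ]
  rw [pow_succ] at hd
  have h2 : ((-1:ℝ)^n)^2 = 1 := by
    rcases Nat.even_or_odd n with h | h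
    · rw [h.neg_one_pow]; norm_num
    · rw [h.neg_one_pow]; norm_num
  linear_combination (-(-1:ℝ)^n) * hd + h2

end aux

theorem stmt7 (α : ℝ) (hα : Irrational α) (ν : ℕ)
    (d2 : ℝ) (hd2 : d2 = Real.sqrt ((qd α (ν+1) - qd α ν) / (xi α ν - xi α (ν+1)))) :
    (1/4) * (d2 * xi α ν + qd α ν / d2)^2 = Fm (astar α (ν+1)) (cq α (ν+2))⁻¹ := by
  set Q := qd α (ν+1) with hQdef
  set q := qd α ν with hqdef
  set y := (cq α (ν+2))⁻¹ with hydef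
  have hcq : 1 < cq α (ν+2) := one_lt_cq_succ hα (ν+1)
  have hy0 : 0 < y := inv_pos.mpr (by linarith)
  have hy1 : y < 1 := by
    rw [hydef]
    exact inv_lt_one_of_one_lt₀ hcq
  have hq1 : (1:ℝ) ≤ q := qd_ge_one hα ν
  have hQq : q ≤ Q := qd_mono hα ν
  have hξpos : 0 < xi α ν := xi_pos hα ν
  have hξ' : xi α (ν+1) = xi α ν * y := by
    have h := xi_succ hα ν
    have hc : cq α (ν+2) ≠ 0 := by linarith
    rw [hydef]
    field_simp
    linarith [h]
  have hsum : Q * xi α ν + q * xi α (ν+1) = 1 := xi_sum hα ν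
  have hξval : xi α ν * (Q + q*y) = 1 := by
    rw [hξ'] at hsum; linarith [hsum]
  have hSpos : 0 < Q + q*y := by nlinarith
  have hxi : xi α ν = 1/(Q + q*y) := by
    rw [eq_div_iff hSpos.ne']; exact hξval
  have hastar : astar α (ν+1) = q / Q := rfl
  rw [hastar]
  have hQpos : (0:ℝ) < Q := by linarith
  rcases eq_or_lt_of_le hQq with heq | hlt
  · -- degenerate case q = Q
    have hd20 : d2 = 0 := by
      rw [hd2, heq, sub_self, zero_div, Real.sqrt_zero]
    rw [hd20, Fm]
    rw [show q / Q = 1 by rw [heq]; exact div_self hQpos.ne']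
    simp
  · -- main case q < Q
    have hdiff : 0 < xi α ν - xi α (ν+1) := by
      rw [hξ']; nlinarith
    have hratpos : 0 < (Q - q)/(xi α ν - xi α (ν+1)) := div_pos (by linarith) hdiff
    have hd2pos : 0 < d2 := by rw [hd2]; exact Real.sqrt_pos.mpr hratpos
    have hd2sq : d2^2 = (Q - q)/(xi α ν - xi α (ν+1)) := by
      rw [hd2, Real.sq_sqrt hratpos.le]
    have hξ'' : xi α (ν+1) = y/(Q+q*y) := by rw [hξ', hxi]; ring
    have hd2sq2 : d2^2 = (Q-q)*(Q+q*y)/(1-y) := by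
      rw [hd2sq, hxi, hξ'',
        show 1/(Q+q*y) - y/(Q+q*y) = (1-y)/(Q+q*y) by ring,
        div_div_eq_mul_div]
    have hstep : d2 * xi α ν + q / d2 = (d2^2 * xi α ν + q)/d2 := by
      field_simp
    rw [hstep, div_pow, hd2sq2, hxi, Fm]
    have h1 : (1:ℝ) - y ≠ 0 := by linarith
    have h2 : (1:ℝ) - q/Q ≠ 0 := by
      have : q/Q < 1 := (div_lt_one hQpos).mpr hlt
      linarith
    have h3 : (1:ℝ) + (q/Q)*y ≠ 0 := by positivity
    have h4 : Q - q ≠ 0 := by linarith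
    field_simp
    ring
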